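/- The gradient of the expected error-corrected score with respect to γ vanishes at the true parameters; explicitly, as a vector identity in ℝ^p, E[(Y − D·θ0 − Z'β0)·Z] + τ0·β0 = 0. -/

import Mathlib

open MeasureTheory

private lemma integrable_mul_of_memL2 {Ω : Type*} [MeasurableSpace Ω] {μ : Measure Ω}
    {f g : Ω → ℝ} (hf : MemLp f 2 μ) (hg : MemLp g 2 μ) :
    Integrable (fun ω => f ω * g ω) μ := by
  rw [← memLp_one_iff_integrable]
  have h := hg.smul (p := 2) (q := 2) (r := 1) hf
  exact h

/-- The gradient of the expected error-corrected score with respect to γ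
vanishes at the true parameters: as a vector identity in ℝ^p,
`E[(Y − D·θ0 − Z'β0)·Z] + τ0·β0 = 0`. -/
theorem corrected_score_gamma_gradient_vanishes
    {Ω : Type*} [MeasurableSpace Ω] {μ : Measure Ω} [IsProbabilityMeasure μ]
    {p : ℕ} (Y D U V : Ω → ℝ) (X A Z : Ω → Fin p → ℝ)
    (θ0 τ0 : ℝ) (β0 γ0 : Fin p → ℝ)
    (hτ0 : 0 < τ0)
    (hY : ∀ ω, Y ω = θ0 * D ω + (∑ j, β0 j * X ω j) + U ω)
    (hD : ∀ ω, D ω = (∑ j, γ0 j * X ω j) + V ω)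
    (hZ : ∀ ω j, Z ω j = X ω j + A ω j)
    -- square integrability of all the random variables involved
    (hL2Y : MemLp Y 2 μ) (hL2D : MemLp D 2 μ)
    (hL2U : MemLp U 2 μ) (hL2V : MemLp V 2 μ)
    (hL2X : ∀ j, MemLp (fun ω => X ω j) 2 μ)
    (hL2A : ∀ j, MemLp (fun ω => A ω j) 2 μ)
    -- measurement-error moments: E[A] = 0 and E[AA'] = τ0 I
    (hA0 : ∀ j, ∫ ω, A ω j ∂μ = 0)
    (hAA : ∀ j k, ∫ ω, A ω j * A ω k ∂μ = if j = k then τ0 else 0)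
    -- orthogonality moment conditions
    (hUV : ∫ ω, U ω * V ω ∂μ = 0)
    (hUX : ∀ j, ∫ ω, U ω * X ω j ∂μ = 0)
    (hVX : ∀ j, ∫ ω, V ω * X ω j ∂μ = 0)
    (hUA : ∀ j, ∫ ω, U ω * A ω j ∂μ = 0)
    (hVA : ∀ j, ∫ ω, V ω * A ω j ∂μ = 0)
    (hDA : ∀ j, ∫ ω, D ω * A ω j ∂μ = 0)
    (hXA : ∀ j k, ∫ ω, X ω j * A ω k ∂μ = 0) :
    ∀ j, (∫ ω, (Y ω - D ω * θ0 - ∑ k, β0 k * Z ω k) * Z ω j ∂μ) + τ0 * β0 j = 0 := by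
  intro j
  -- pointwise identity
  have key : ∀ ω, (Y ω - D ω * θ0 - ∑ k, β0 k * Z ω k) * Z ω j
      = U ω * X ω j + U ω * A ω j
        - (∑ k, β0 k * (A ω k * X ω j)) - (∑ k, β0 k * (A ω k * A ω j)) := by
    intro ω
    have h1 : Y ω - D ω * θ0 - ∑ k, β0 k * Z ω k = U ω - ∑ k, β0 k * A ω k := by
      rw [hY]
      simp only [hZ, mul_add, Finset.sum_add_distrib]
      ring
    rw [h1, hZ, sub_mul, mul_add, Finset.sum_mul]
    simp only [mul_add, Finset.sum_add_distrib, mul_assoc]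
    ring
  have iUX : Integrable (fun ω => U ω * X ω j) μ :=
    integrable_mul_of_memL2 hL2U (hL2X j)
  have iUA : Integrable (fun ω => U ω * A ω j) μ :=
    integrable_mul_of_memL2 hL2U (hL2A j)
  have iAX : ∀ k, Integrable (fun ω => A ω k * X ω j) μ :=
    fun k => integrable_mul_of_memL2 (hL2A k) (hL2X j)
  have iAA : ∀ k, Integrable (fun ω => A ω k * A ω j) μ :=
    fun k => integrable_mul_of_memL2 (hL2A k) (hL2A j)
  have iSAX : Integrable (fun ω => ∑ k, β0 k * (A ω k * X ω j)) μ :=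
    integrable_finset_sum _ (fun k _ => ((iAX k).const_mul _))
  have iSAA : Integrable (fun ω => ∑ k, β0 k * (A ω k * A ω j)) μ :=
    integrable_finset_sum _ (fun k _ => ((iAA k).const_mul _))
  have i2 : Integrable (fun ω => U ω * X ω j + U ω * A ω j) μ := iUX.add iUA
  have i3 : Integrable
      (fun ω => U ω * X ω j + U ω * A ω j - ∑ k, β0 k * (A ω k * X ω j)) μ := i2.sub iSAX
  calc (∫ ω, (Y ω - D ω * θ0 - ∑ k, β0 k * Z ω k) * Z ω j ∂μ) + τ0 * β0 j
      = (∫ ω, (U ω * X ω j + U ω * A ω j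
            - (∑ k, β0 k * (A ω k * X ω j)) - (∑ k, β0 k * (A ω k * A ω j))) ∂μ)
          + τ0 * β0 j := by
        congr 1
        exact integral_congr_ae (Filter.Eventually.of_forall key)
    _ = ((∫ ω, U ω * X ω j ∂μ) + (∫ ω, U ω * A ω j ∂μ)
          - (∑ k, β0 k * ∫ ω, A ω k * X ω j ∂μ)
          - (∑ k, β0 k * ∫ ω, A ω k * A ω j ∂μ)) + τ0 * β0 j := by
        rw [integral_sub i3 iSAA, integral_sub i2 iSAX, integral_add iUX iUA,
            integral_finset_sum _ (fun k _ => ((iAX k).const_mul _)),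
            integral_finset_sum _ (fun k _ => ((iAA k).const_mul _))]
        simp [MeasureTheory.integral_const_mul]
    _ = 0 := by
        have h1 : ∀ k, (∫ ω, A ω k * X ω j ∂μ) = 0 := by
          intro k
          rw [← hXA j k]
          exact integral_congr_ae (Filter.Eventually.of_forall fun ω => mul_comm _ _)
        have h2 : (∑ k, β0 k * ∫ ω, A ω k * A ω j ∂μ) = τ0 * β0 j := by
          have he : ∀ k, β0 k * (∫ ω, A ω k * A ω j ∂μ)
              = if k = j then τ0 * β0 j else 0 := by
            intro k
            rw [hAA k j]
            by_cases h : k = j <;> simp [h] <;> ring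
          simp only [he, Finset.sum_ite_eq', Finset.mem_univ, if_true]
        simp [hUX, hUA, h1, h2]
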